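/- Let A be a commutative unital Banach algebra and I a closed ideal such that every element of I is nilpotent (I is a nil ideal). Then I is nilpotent: there exists a positive integer N with I^N = {0}. -/
import Mathlib

open Finset Polynomial

/-- If a Banach-space-valued polynomial function vanishes on a ball of positive
radius around 0 in ℂ, all its coefficients vanish. -/
lemma aux_coeffs_zero {A : Type*} [NormedRing A] [NormedAlgebra ℂ A] {m : ℕ} (c : ℕ → A)
    {δ : ℝ} (hδ : 0 < δ)
    (h : ∀ t : ℂ, ‖t‖ < δ → ∑ k ∈ Finset.range m, t ^ k • c k = 0) :
    ∀ k < m, c k = 0 := by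
  intro k hk
  apply NormedSpace.eq_zero_of_forall_dual_eq_zero ℂ
  intro φ
  set p : Polynomial ℂ := ∑ j ∈ Finset.range m, Polynomial.monomial j (φ (c j)) with hp
  have hroot : ∀ t : ℂ, ‖t‖ < δ → p.IsRoot t := by
    intro t ht
    have h0 := h t ht
    have : p.eval t = φ (∑ j ∈ Finset.range m, t ^ j • c j) := by
      rw [hp, Polynomial.eval_finset_sum, map_sum]
      refine Finset.sum_congr rfl fun j _ => ?_
      rw [Polynomial.eval_monomial, φ.map_smul, smul_eq_mul, mul_comm]
    rw [Polynomial.IsRoot, this, h0, map_zero]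
  have hp0 : p = 0 := by
    apply p.eq_zero_of_infinite_isRoot
    apply Set.infinite_of_injective_forall_mem
      (f := fun i : ℕ => ((δ / (i + 2) : ℝ) : ℂ))
    · intro i j hij
      simp only [Complex.ofReal_inj] at hij
      have hi : (0:ℝ) < i + 2 := by positivity
      have hj : (0:ℝ) < j + 2 := by positivity
      rw [div_eq_div_iff hi.ne' hj.ne'] at hij
      have : ((i:ℝ)) = j := by
        have := mul_left_cancel₀ (ne_of_gt hδ) (by linarith : δ * ((j:ℝ)+2) = δ * ((i:ℝ)+2))
        linarith
      exact_mod_cast this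
    · intro i
      apply hroot
      have hi : (0:ℝ) < (i:ℝ) + 2 := by positivity
      have : ‖((δ / (i + 2) : ℝ) : ℂ)‖ = δ / ((i:ℝ) + 2) := by
        rw [Complex.norm_real, Real.norm_eq_abs, abs_of_pos (by positivity)]
      rw [this]
      rw [div_lt_iff₀ hi]
      nlinarith
  have : p.coeff k = φ (c k) := by
    rw [hp, Polynomial.finset_sum_coeff]
    rw [Finset.sum_eq_single k]
    · simp
    · intro j _ hjk; simp [Polynomial.coeff_monomial, hjk]
    · intro hkm; exact absurd (Finset.mem_range.2 hk) hkm
  rw [hp0] at this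
  simpa using this.symm

theorem stmt_14 {A : Type*} [NormedCommRing A] [NormedAlgebra ℂ A]
    [CompleteSpace A] (I : Ideal A) (hclosed : IsClosed (I : Set A))
    (hnil : ∀ x ∈ I, IsNilpotent x) :
    ∃ N : ℕ, 0 < N ∧ I ^ N = ⊥ := by
  haveI : CompleteSpace (I : Set A) := hclosed.completeSpace_coe
  haveI : Nonempty (I : Set A) := ⟨⟨0, I.zero_mem⟩⟩
  -- Baire category: some power n kills a ball in I
  obtain ⟨n, x₀, hx₀⟩ : ∃ n : ℕ, ∃ x₀ : (I : Set A),
      x₀ ∈ interior {x : (I : Set A) | (x : A) ^ n = 0} := by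
    obtain ⟨n, x₀, hx₀⟩ := nonempty_interior_of_iUnion_of_closed
      (f := fun n : ℕ => {x : (I : Set A) | (x : A) ^ n = 0})
      (fun n => isClosed_eq ((continuous_subtype_val).pow n) continuous_const)
      (by
        rw [Set.eq_univ_iff_forall]
        intro x
        rw [Set.mem_iUnion]
        exact hnil x x.2)
    exact ⟨n, x₀, hx₀⟩
  obtain ⟨ε, hε, hball⟩ := Metric.isOpen_iff.1 isOpen_interior x₀ hx₀
  have hball' : ∀ y ∈ I, ‖y - (x₀ : A)‖ < ε → y ^ n = 0 := by
    intro y hy h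
    have hmem : (⟨y, hy⟩ : (I : Set A)) ∈ Metric.ball x₀ ε := by
      rw [Metric.mem_ball, Subtype.dist_eq, dist_eq_norm]; exact h
    have h2 := hball hmem
    have h3 := interior_subset h2
    exact h3
  -- every element of I has n-th power zero
  have hy_all : ∀ y ∈ I, y ^ n = 0 := by
    intro y hy
    have hδ : (0:ℝ) < ε / (‖y‖ + 1) := by positivity
    have hexp : ∀ t : ℂ, ‖t‖ < ε / (‖y‖ + 1) →
        ∑ k ∈ Finset.range (n + 1),
          t ^ k • (y ^ k * (x₀ : A) ^ (n - k) * (n.choose k : A)) = 0 := by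
      intro t ht
      have hmem : (x₀ : A) + t • y ∈ I := by
        refine I.add_mem x₀.2 ?_
        rw [Algebra.smul_def]
        exact I.mul_mem_left _ hy
      have hnorm : ‖((x₀ : A) + t • y) - (x₀ : A)‖ < ε := by
        rw [add_sub_cancel_left, norm_smul]
        have h1 : ‖t‖ * ‖y‖ ≤ ‖t‖ * (‖y‖ + 1) :=
          mul_le_mul_of_nonneg_left (by linarith) (norm_nonneg t)
        have h2 : ‖t‖ * (‖y‖ + 1) < ε := by
          rw [← lt_div_iff₀ (by positivity)]
          exact ht
        linarith
      have h0 := hball' _ hmem hnorm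
      calc ∑ k ∈ Finset.range (n + 1),
            t ^ k • (y ^ k * (x₀ : A) ^ (n - k) * (n.choose k : A))
          = ((x₀ : A) + t • y) ^ n := by
            rw [add_comm ((x₀ : A)) (t • y), add_pow]
            refine (Finset.sum_congr rfl fun k _ => ?_).symm
            simp only [_root_.smul_pow, smul_mul_assoc]
        _ = 0 := h0
    have := aux_coeffs_zero _ hδ hexp n (by omega)
    simpa using this
  -- case n = 0 : the algebra is trivial
  rcases Nat.eq_zero_or_pos n with hn0 | hn
  · have h1 : (1 : A) = 0 := by simpa [hn0] using hy_all 0 I.zero_mem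
    refine ⟨1, one_pos, ?_⟩
    rw [pow_one, eq_bot_iff]
    intro x _
    have : x = 0 := by calc x = x * 1 := (mul_one x).symm
      _ = 0 := by rw [h1, mul_zero]
    simpa [Ideal.mem_bot] using this
  -- uniform bound: polarization-style induction
  · have key : ∀ k, k ≤ n → ∀ b ∈ I ^ k, ∀ a ∈ I, a ^ (n - k) * b = 0 := by
      intro k
      induction k with
      | zero =>
        intro _ b _ a ha
        rw [Nat.sub_zero, hy_all a ha, zero_mul]
      | succ k ih =>
        intro hkn b hb a ha
        rw [pow_succ] at hb
        refine Submodule.mul_induction_on hb (fun c hc d hd => ?_)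
          (fun x y hx hy => by rw [mul_add, hx, hy, add_zero])
        -- goal : a ^ (n - (k+1)) * (c * d) = 0, c ∈ I^k, d ∈ I
        set m := n - k with hm
        have hm1 : 0 < m := by omega
        have hexp : ∀ t : ℂ, ‖t‖ < 1 →
            ∑ j ∈ Finset.range (m + 1),
              t ^ j • (d ^ j * a ^ (m - j) * (m.choose j : A) * c) = 0 := by
          intro t _
          have hmem : a + t • d ∈ I := by
            refine I.add_mem ha ?_
            rw [Algebra.smul_def]
            exact I.mul_mem_left _ hd
          have h0 := ih (by omega) c hc (a + t • d) hmem
          calc ∑ j ∈ Finset.range (m + 1),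
                t ^ j • (d ^ j * a ^ (m - j) * (m.choose j : A) * c)
              = (a + t • d) ^ (n - k) * c := by
                rw [add_comm a (t • d), add_pow, Finset.sum_mul]
                refine (Finset.sum_congr rfl fun j _ => ?_).symm
                simp only [← hm, _root_.smul_pow, smul_mul_assoc]
            _ = 0 := h0
        have hco := aux_coeffs_zero _ one_pos hexp 1 (by omega)
        -- hco : d ^ 1 * a ^ (m - 1) * (m.choose 1 : A) * c = 0
        rw [pow_one, Nat.choose_one_right] at hco
        have hsm : (m : ℂ) • (a ^ (n - (k+1)) * (c * d)) = 0 := by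
          rw [Algebra.smul_def, map_natCast]
          have hnk : n - (k + 1) = m - 1 := by omega
          rw [hnk]
          calc (m : A) * (a ^ (m - 1) * (c * d))
              = d * a ^ (m - 1) * (m : A) * c := by ring
            _ = 0 := hco
        have hmc : (m : ℂ) ≠ 0 := Nat.cast_ne_zero.2 (by omega)
        have := congrArg (fun z => (m : ℂ)⁻¹ • z) hsm
        simpa [smul_smul, inv_mul_cancel₀ hmc] using this
    refine ⟨n, hn, ?_⟩
    rw [eq_bot_iff]
    intro b hb
    have := key n le_rfl b hb 0 I.zero_mem
    rw [Nat.sub_self, pow_zero, one_mul] at this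
    simpa [Ideal.mem_bot] using this
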